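/- Let (d_i)_{i≥1} and (ρ_i)_{i≥1} be sequences of positive reals with 0 < ρ_i ≤ d_i for all i ≥ 1 and inf_{i≥1} d_i > 0, let d_0 > 0, and define F(x) := (1/(x+d_0))·∑_{i=1}^∞ i·ρ_i·∏_{j=1}^i x/(x+d_j) for x ≥ 0. If i·ρ_i/d_i → 0 as i → ∞, then F(x) → 0 as x → ∞; moreover F attains a maximum m > 0 on [0,∞), for every c with 0 < c ≤ m there exists x > 0 with F(x) = c, and for every c > m there is no x ≥ 0 with F(x) = c. -/

import Mathlib

open Filter Finset

namespace SilicosisAux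

noncomputable def Pf (d : ℕ → ℝ) (x : ℝ) (i : ℕ) : ℝ := ∏ j ∈ Finset.Icc 1 i, x / (x + d j)

noncomputable def gf (d ρ : ℕ → ℝ) (x : ℝ) (i : ℕ) : ℝ :=
  ((i + 1 : ℕ) : ℝ) * ρ (i + 1) * Pf d x (i + 1)

variable {d ρ : ℕ → ℝ} {x : ℝ}

lemma P_zero : Pf d x 0 = 1 := by simp [Pf]

lemma P_succ (i : ℕ) : Pf d x (i + 1) = Pf d x i * (x / (x + d (i + 1))) :=
  Finset.prod_Icc_succ_top (Nat.succ_le_succ (Nat.zero_le i)) _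

lemma xd_pos (hd : ∀ j, 1 ≤ j → 0 < d j) (hx : 0 ≤ x) {j : ℕ} (hj : 1 ≤ j) :
    0 < x + d j := add_pos_of_nonneg_of_pos hx (hd j hj)

lemma P_nonneg (hd : ∀ j, 1 ≤ j → 0 < d j) (hx : 0 ≤ x) (i : ℕ) : 0 ≤ Pf d x i :=
  Finset.prod_nonneg fun j hj =>
    div_nonneg hx (xd_pos hd hx (Finset.mem_Icc.mp hj).1).le

lemma P_le_one (hd : ∀ j, 1 ≤ j → 0 < d j) (hx : 0 ≤ x) (i : ℕ) : Pf d x i ≤ 1 :=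
  Finset.prod_le_one
    (fun j hj => div_nonneg hx (xd_pos hd hx (Finset.mem_Icc.mp hj).1).le)
    (fun j hj => div_le_one_of_le₀ (le_add_of_nonneg_right (hd j (Finset.mem_Icc.mp hj).1).le)
      (xd_pos hd hx (Finset.mem_Icc.mp hj).1).le)

lemma tel (hd : ∀ j, 1 ≤ j → 0 < d j) (hx : 0 ≤ x) (i : ℕ) :
    d (i + 1) * Pf d x (i + 1) = x * (Pf d x i - Pf d x (i + 1)) := by
  have hpos : 0 < x + d (i + 1) := xd_pos hd hx (Nat.succ_le_succ (Nat.zero_le i))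
  rw [P_succ]
  field_simp
  ring

lemma g_nonneg (hd : ∀ j, 1 ≤ j → 0 < d j) (hρ : ∀ i, 1 ≤ i → 0 < ρ i) (hx : 0 ≤ x) (i : ℕ) :
    0 ≤ gf d ρ x i :=
  mul_nonneg (mul_nonneg (Nat.cast_nonneg _) (hρ _ (Nat.succ_le_succ (Nat.zero_le i))).le)
    (P_nonneg hd hx _)

lemma sum_bound (hd : ∀ j, 1 ≤ j → 0 < d j) (hx : 0 ≤ x) {E : ℝ} (hE : 0 ≤ E) {N : ℕ}
    (hcoef : ∀ i : ℕ, ((N + i + 1 : ℕ) : ℝ) * ρ (N + i + 1) ≤ E * d (N + i + 1)) (n : ℕ) :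
    ∑ i ∈ Finset.range n, gf d ρ x (N + i) ≤ E * x := by
  have hEx : 0 ≤ E * x := mul_nonneg hE hx
  calc ∑ i ∈ Finset.range n, gf d ρ x (N + i)
      ≤ ∑ i ∈ Finset.range n, (E * x) * (Pf d x (N + i) - Pf d x (N + i + 1)) := by
        refine Finset.sum_le_sum fun i _ => ?_
        have h1 : gf d ρ x (N + i) ≤ (E * d (N + i + 1)) * Pf d x (N + i + 1) :=
          mul_le_mul_of_nonneg_right (hcoef i) (P_nonneg hd hx _)
        have h2 : (E * d (N + i + 1)) * Pf d x (N + i + 1)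
            = (E * x) * (Pf d x (N + i) - Pf d x (N + i + 1)) := by
          rw [mul_assoc, tel hd hx (N + i)]; ring
        linarith
    _ = (E * x) * ∑ i ∈ Finset.range n, (Pf d x (N + i) - Pf d x (N + i + 1)) :=
        (Finset.mul_sum _ _ _).symm
    _ = (E * x) * (Pf d x N - Pf d x (N + n)) := by
        congr 1
        exact Finset.sum_range_sub' (fun i => Pf d x (N + i)) n
    _ ≤ (E * x) * 1 := by
        refine mul_le_mul_of_nonneg_left ?_ hEx
        have := P_le_one hd hx N
        have := P_nonneg hd hx (N + n)
        linarith
    _ = E * x := mul_one _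

lemma summable_g (hd : ∀ j, 1 ≤ j → 0 < d j) (hρ : ∀ i, 1 ≤ i → 0 < ρ i) (hx : 0 ≤ x)
    {B : ℝ} (hB0 : 0 ≤ B) (hBd : ∀ i : ℕ, 1 ≤ i → (i : ℝ) * ρ i ≤ B * d i) :
    Summable (gf d ρ x) := by
  refine summable_of_sum_range_le (c := B * x) (g_nonneg hd hρ hx) fun n => ?_
  have := sum_bound (ρ := ρ) hd hx hB0 (N := 0)
    (fun i => by simpa using hBd (i + 1) (Nat.succ_le_succ (Nat.zero_le i))) n
  simpa using this

lemma tsum_g_le (hd : ∀ j, 1 ≤ j → 0 < d j) (hρ : ∀ i, 1 ≤ i → 0 < ρ i) (hx : 0 ≤ x)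
    {B : ℝ} (hB0 : 0 ≤ B) (hBd : ∀ i : ℕ, 1 ≤ i → (i : ℝ) * ρ i ≤ B * d i)
    {E : ℝ} (hE : 0 ≤ E) {N : ℕ}
    (hcoef : ∀ i : ℕ, ((N + i + 1 : ℕ) : ℝ) * ρ (N + i + 1) ≤ E * d (N + i + 1)) :
    ∑' i, gf d ρ x i ≤ (∑ i ∈ Finset.range N, ((i + 1 : ℕ) : ℝ) * ρ (i + 1)) + E * x := by
  have hs := summable_g hd hρ hx hB0 hBd
  rw [← hs.sum_add_tsum_nat_add N]
  refine add_le_add ?_ ?_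
  · refine Finset.sum_le_sum fun i _ => ?_
    have h1 : gf d ρ x i = ((i + 1 : ℕ) : ℝ) * ρ (i + 1) * Pf d x (i + 1) := rfl
    have h2 : 0 ≤ ((i + 1 : ℕ) : ℝ) * ρ (i + 1) :=
      mul_nonneg (Nat.cast_nonneg _) (hρ _ (Nat.succ_le_succ (Nat.zero_le i))).le
    calc gf d ρ x i ≤ ((i + 1 : ℕ) : ℝ) * ρ (i + 1) * 1 := by
          rw [h1]; exact mul_le_mul_of_nonneg_left (P_le_one hd hx _) h2
      _ = ((i + 1 : ℕ) : ℝ) * ρ (i + 1) := mul_one _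
  · have hcong : ∑' i, gf d ρ x (i + N) = ∑' i, gf d ρ x (N + i) :=
      tsum_congr fun i => by rw [Nat.add_comm]
    rw [hcong]
    exact Real.tsum_le_of_sum_range_le (fun i => g_nonneg hd hρ hx _)
      (sum_bound hd hx hE hcoef)


lemma contS (hd : ∀ j, 1 ≤ j → 0 < d j) (hρ : ∀ i, 1 ≤ i → 0 < ρ i)
    {δ B : ℝ} (hδ : 0 < δ) (hdδ : ∀ j, 1 ≤ j → δ ≤ d j) (hB0 : 0 ≤ B)
    (hBd : ∀ i : ℕ, 1 ≤ i → (i : ℝ) * ρ i ≤ B * d i) :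
    ContinuousOn (fun x => ∑' i, gf d ρ x i) (Set.Ici 0) := by
  intro x₀ hx₀
  have hx₀0 : (0:ℝ) ≤ x₀ := hx₀
  set M : ℝ := x₀ + 1 with hM
  have hM0 : 0 < M := by linarith
  set q : ℝ := M / (M + δ) with hq
  have hMδ : 0 < M + δ := by linarith
  have hq0 : 0 ≤ q := div_nonneg hM0.le hMδ.le
  have hq1 : q < 1 := (div_lt_one hMδ).mpr (by linarith)
  -- uniform bound on Icc 0 M
  have hbound : ∀ (n : ℕ) (x : ℝ), x ∈ Set.Icc (0:ℝ) M → ‖gf d ρ x n‖ ≤ (B * M) * q ^ n := by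
    intro n x hxmem
    obtain ⟨hx, hxM⟩ := hxmem
    have hqn : (0:ℝ) ≤ q ^ n := pow_nonneg hq0 n
    have hPq : Pf d x n ≤ q ^ n := by
      have hfac : ∀ j ∈ Finset.Icc 1 n, x / (x + d j) ≤ q := by
        intro j hj
        have hj1 : 1 ≤ j := (Finset.mem_Icc.mp hj).1
        have hxδ : 0 < x + δ := by linarith
        have h1 : x / (x + d j) ≤ x / (x + δ) :=
          div_le_div_of_nonneg_left hx hxδ (by linarith [hdδ j hj1])
        have h2 : x / (x + δ) ≤ M / (M + δ) := by
          rw [div_le_div_iff₀ hxδ hMδ]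
          nlinarith
        exact h1.trans h2
      calc Pf d x n ≤ ∏ _j ∈ Finset.Icc 1 n, q :=
            Finset.prod_le_prod
              (fun j hj => div_nonneg hx (xd_pos hd hx (Finset.mem_Icc.mp hj).1).le) hfac
        _ = q ^ n := by rw [Finset.prod_const, Nat.card_Icc]; norm_num
      -- card Icc 1 n = n + 1 - 1 = n
    have hd1 : 0 < d (n + 1) := hd _ (Nat.succ_le_succ (Nat.zero_le n))
    have hxd1 : 0 < x + d (n + 1) := by linarith
    have hdt : d (n + 1) * (x / (x + d (n + 1))) ≤ x := by
      rw [mul_div_assoc']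
      rw [div_le_iff₀ hxd1]
      nlinarith
    have ht0 : 0 ≤ x / (x + d (n + 1)) := div_nonneg hx hxd1.le
    have hP0 : 0 ≤ Pf d x n := P_nonneg hd hx n
    have hgf : gf d ρ x n = ((n + 1 : ℕ) : ℝ) * ρ (n + 1) * (Pf d x n * (x / (x + d (n + 1)))) := by
      rw [gf, P_succ]
    rw [Real.norm_eq_abs, abs_of_nonneg (g_nonneg hd hρ hx n), hgf]
    have hc : ((n + 1 : ℕ) : ℝ) * ρ (n + 1) ≤ B * d (n + 1) :=
      hBd (n + 1) (Nat.succ_le_succ (Nat.zero_le n))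
    calc ((n + 1 : ℕ) : ℝ) * ρ (n + 1) * (Pf d x n * (x / (x + d (n + 1))))
        ≤ (B * d (n + 1)) * (Pf d x n * (x / (x + d (n + 1)))) :=
          mul_le_mul_of_nonneg_right hc (mul_nonneg hP0 ht0)
      _ = B * (Pf d x n * (d (n + 1) * (x / (x + d (n + 1))))) := by ring
      _ ≤ B * (q ^ n * x) := by
          refine mul_le_mul_of_nonneg_left ?_ hB0
          exact mul_le_mul hPq hdt (mul_nonneg hd1.le ht0) hqn
      _ ≤ B * (q ^ n * M) := by
          refine mul_le_mul_of_nonneg_left ?_ hB0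
          exact mul_le_mul_of_nonneg_left hxM hqn
      _ = (B * M) * q ^ n := by ring
  have hu : Summable (fun n : ℕ => (B * M) * q ^ n) :=
    (summable_geometric_of_lt_one hq0 hq1).mul_left _
  have huc := tendstoUniformlyOn_tsum hu hbound
  have hpc : ∀ (t : Finset ℕ), ContinuousOn (fun x => ∑ n ∈ t, gf d ρ x n) (Set.Icc (0:ℝ) M) := by
    intro t
    apply continuousOn_finset_sum
    intro n _
    show ContinuousOn (fun x => ((n + 1 : ℕ) : ℝ) * ρ (n + 1)
      * ∏ j ∈ Finset.Icc 1 (n + 1), x / (x + d j)) (Set.Icc (0:ℝ) M)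
    apply ContinuousOn.mul continuousOn_const
    apply continuousOn_finset_prod
    intro j hj
    have hj1 : 1 ≤ j := (Finset.mem_Icc.mp hj).1
    exact ContinuousOn.div continuousOn_id (continuousOn_id.add continuousOn_const)
      (fun x hx => (xd_pos hd hx.1 hj1).ne')
  have hcS : ContinuousOn (fun x => ∑' i, gf d ρ x i) (Set.Icc (0:ℝ) M) :=
    huc.continuousOn (Filter.Eventually.of_forall hpc).frequently
  have hmem : Set.Icc (0:ℝ) M ∈ nhdsWithin x₀ (Set.Ici 0) := by
    rw [← Set.Ici_inter_Iic]
    exact Filter.inter_mem self_mem_nhdsWithin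
      (mem_nhdsWithin_of_mem_nhds (Iic_mem_nhds (by linarith)))
  exact (hcS.continuousWithinAt ⟨hx₀0, by linarith⟩).mono_of_mem_nhdsWithin hmem

end SilicosisAux

/-- If `i·ρ_i = o(d_i)` as `i → ∞`, then the silicosis equilibrium function
`F(x) = (1/(x+d₀))·∑_{i=1}^∞ i·ρ_i·∏_{j=1}^i x/(x+d_j)` tends to `0` as `x → ∞`;
moreover `F` attains a maximum `m > 0` on `[0,∞)`, every `c` with `0 < c ≤ m` is
attained at some `x > 0`, and no `c > m` is attained at any `x ≥ 0`. -/
theorem silicosis_equilibrium_max_attained_case (d ρ : ℕ → ℝ)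
    (hρ : ∀ i : ℕ, 1 ≤ i → 0 < ρ i) (hρd : ∀ i : ℕ, 1 ≤ i → ρ i ≤ d i)
    (hz : 0 < ⨅ i : ℕ, d (i + 1)) (d₀ : ℝ) (hd₀ : 0 < d₀)
    (F : ℝ → ℝ)
    (hF : ∀ x : ℝ, F x = (1 / (x + d₀)) *
      ∑' i : ℕ, ((i + 1 : ℕ) : ℝ) * ρ (i + 1) * ∏ j ∈ Finset.Icc 1 (i + 1), x / (x + d j))
    (h : Tendsto (fun i : ℕ => (i : ℝ) * ρ i / d i) atTop (nhds 0)) :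
    Tendsto F atTop (nhds 0) ∧
      ∃ m : ℝ, 0 < m ∧ IsGreatest (F '' Set.Ici 0) m ∧
        (∀ c : ℝ, 0 < c → c ≤ m → ∃ x : ℝ, 0 < x ∧ F x = c) ∧
        (∀ c : ℝ, m < c → ¬ ∃ x : ℝ, 0 ≤ x ∧ F x = c) := by
  classical
  have hbdd : BddBelow (Set.range fun i : ℕ => d (i + 1)) := by
    by_contra hb
    rw [Real.iInf_of_not_bddBelow hb] at hz
    exact lt_irrefl 0 hz
  set δ := ⨅ i : ℕ, d (i + 1) with hδdef
  have hδpos : 0 < δ := hz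
  have hdδ : ∀ j : ℕ, 1 ≤ j → δ ≤ d j := by
    intro j hj
    have h1 := ciInf_le hbdd (j - 1)
    rwa [Nat.sub_add_cancel hj] at h1
  have hd : ∀ j : ℕ, 1 ≤ j → 0 < d j := fun j hj => lt_of_lt_of_le hδpos (hdδ j hj)
  obtain ⟨B, hBub⟩ := h.bddAbove_range
  have hB : ∀ i : ℕ, (i : ℝ) * ρ i / d i ≤ B := fun i => hBub (Set.mem_range_self i)
  have hB0 : 0 ≤ B := by
    have h1 := hB 1
    have h2 : 0 < ((1 : ℕ) : ℝ) * ρ 1 / d 1 := by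
      have hρ1 := hρ 1 le_rfl
      have hd1 := hd 1 le_rfl
      positivity
    linarith
  have hBd : ∀ i : ℕ, 1 ≤ i → (i : ℝ) * ρ i ≤ B * d i := by
    intro i hi
    have h1 := hB i
    rw [div_le_iff₀ (hd i hi)] at h1
    linarith
  have hF' : ∀ x : ℝ, F x = (1 / (x + d₀)) * ∑' i, SilicosisAux.gf d ρ x i := hF
  have hd₀x : ∀ x : ℝ, 0 ≤ x → 0 < x + d₀ := fun x hx => by linarith
  have hFnn : ∀ x : ℝ, 0 ≤ x → 0 ≤ F x := by
    intro x hx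
    rw [hF' x]
    have := hd₀x x hx
    exact mul_nonneg (by positivity) (tsum_nonneg (SilicosisAux.g_nonneg hd hρ hx))
  -- quantitative upper bound for F
  have hFle : ∀ ε : ℝ, 0 < ε → ∃ C : ℝ, 0 ≤ C ∧ ∀ x : ℝ, 0 ≤ x →
      F x ≤ (C + ε * x) / (x + d₀) := by
    intro ε hε
    obtain ⟨N, hN⟩ := Metric.tendsto_atTop.mp h ε hε
    refine ⟨∑ i ∈ Finset.range N, ((i + 1 : ℕ) : ℝ) * ρ (i + 1),
      Finset.sum_nonneg fun i _ =>
        mul_nonneg (Nat.cast_nonneg _) (hρ _ (Nat.succ_le_succ (Nat.zero_le i))).le, ?_⟩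
    intro x hx
    have hcoef : ∀ i : ℕ, ((N + i + 1 : ℕ) : ℝ) * ρ (N + i + 1) ≤ ε * d (N + i + 1) := by
      intro i
      have h1 := hN (N + i + 1) (by omega)
      rw [Real.dist_eq, sub_zero] at h1
      have h2 := (le_abs_self _).trans_lt h1
      rw [div_lt_iff₀ (hd _ (by omega))] at h2
      linarith
    have hts := SilicosisAux.tsum_g_le hd hρ hx hB0 hBd hε.le hcoef
    rw [hF' x]
    have hpos := hd₀x x hx
    calc (1 / (x + d₀)) * ∑' i, SilicosisAux.gf d ρ x i
        ≤ (1 / (x + d₀)) * ((∑ i ∈ Finset.range N, ((i + 1 : ℕ) : ℝ) * ρ (i + 1)) + ε * x) :=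
          mul_le_mul_of_nonneg_left hts (by positivity)
      _ = ((∑ i ∈ Finset.range N, ((i + 1 : ℕ) : ℝ) * ρ (i + 1)) + ε * x) / (x + d₀) := by
          rw [one_div, inv_mul_eq_div]
  -- part 1 : tendsto
  have htends : Tendsto F atTop (nhds 0) := by
    rw [Metric.tendsto_nhds]
    intro ε hε
    obtain ⟨C, hC0, hC⟩ := hFle (ε / 2) (half_pos hε)
    filter_upwards [eventually_ge_atTop (max 1 (2 * C / ε + 1))] with x hx1
    have hx1' : (1 : ℝ) ≤ x := le_trans (le_max_left _ _) hx1
    have hx2 : 2 * C / ε + 1 ≤ x := le_trans (le_max_right _ _) hx1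
    have hx : (0 : ℝ) ≤ x := by linarith
    have hpos : 0 < x + d₀ := hd₀x x hx
    have hFx := hC x hx
    rw [dist_zero_right, Real.norm_eq_abs, abs_of_nonneg (hFnn x hx)]
    have hεx : 2 * C + ε ≤ ε * x := by
      have e1 : ε * (2 * C / ε) = 2 * C := by field_simp
      have e2 : ε * (2 * C / ε + 1) ≤ ε * x := mul_le_mul_of_nonneg_left hx2 hε.le
      nlinarith
    have key : (C + ε / 2 * x) / (x + d₀) < ε := by
      rw [div_lt_iff₀ hpos]
      nlinarith [mul_pos hε hd₀]
    linarith
  -- continuity of F on [0, ∞)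
  have hcont : ContinuousOn F (Set.Ici 0) := by
    have h1 : ContinuousOn (fun x : ℝ => (1 / (x + d₀)) * ∑' i, SilicosisAux.gf d ρ x i)
        (Set.Ici 0) := by
      apply ContinuousOn.mul
      · exact ContinuousOn.div continuousOn_const (continuousOn_id.add continuousOn_const)
          (fun x hx => (hd₀x x hx).ne')
      · exact SilicosisAux.contS hd hρ hδpos hdδ hB0 hBd
    exact h1.congr fun x _ => hF' x
  -- F 0 = 0
  have hF0 : F 0 = 0 := by
    rw [hF' 0]
    have hz0 : ∀ i : ℕ, SilicosisAux.gf d ρ 0 i = 0 := by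
      intro i
      have hP : SilicosisAux.Pf d 0 (i + 1) = 0 :=
        Finset.prod_eq_zero (Finset.mem_Icc.mpr ⟨le_rfl, Nat.succ_le_succ (Nat.zero_le i)⟩)
          (by simp)
      simp [SilicosisAux.gf, hP]
    have : ∑' i, SilicosisAux.gf d ρ 0 i = ∑' _i : ℕ, (0 : ℝ) := tsum_congr hz0
    rw [this, tsum_zero, mul_zero]
  -- F 1 > 0
  have hsum1 : Summable (SilicosisAux.gf d ρ 1) :=
    SilicosisAux.summable_g hd hρ (by norm_num) hB0 hBd
  have hF1 : 0 < F 1 := by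
    rw [hF' 1]
    have hgt : 0 < SilicosisAux.gf d ρ 1 0 := by
      have hP : SilicosisAux.Pf d 1 1 = 1 / (1 + d 1) := by
        simp [SilicosisAux.Pf]
      have hd1 := hd 1 le_rfl
      have hρ1 := hρ 1 le_rfl
      have : SilicosisAux.gf d ρ 1 0 = ((1 : ℕ) : ℝ) * ρ 1 * (1 / (1 + d 1)) := by
        rw [SilicosisAux.gf, hP]
      rw [this]
      have : (0:ℝ) < 1 + d 1 := by linarith
      positivity
    have hle := hsum1.le_tsum 0 fun i _ => SilicosisAux.g_nonneg hd hρ (by norm_num) i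
    have : (0:ℝ) < 1 + d₀ := by linarith
    exact mul_pos (by positivity) (lt_of_lt_of_le hgt hle)
  -- threshold X
  have hev : ∀ᶠ x : ℝ in atTop, F x < F 1 := htends.eventually_lt_const hF1
  obtain ⟨X₀, hX₀⟩ := eventually_atTop.mp hev
  set X := max X₀ 1 with hXdef
  have hX1 : (1 : ℝ) ≤ X := le_max_right _ _
  obtain ⟨xm, hxm_mem, hxm_max'⟩ := isCompact_Icc.exists_isMaxOn
    (Set.nonempty_Icc.mpr (by linarith : (0:ℝ) ≤ X))
    (hcont.mono Set.Icc_subset_Ici_self)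
  have hxm_max : ∀ y ∈ Set.Icc (0:ℝ) X, F y ≤ F xm := isMaxOn_iff.mp hxm_max'
  have hm1 : F 1 ≤ F xm := hxm_max 1 ⟨by norm_num, hX1⟩
  have hm0 : 0 < F xm := lt_of_lt_of_le hF1 hm1
  have hgreat : IsGreatest (F '' Set.Ici 0) (F xm) := by
    constructor
    · exact ⟨xm, hxm_mem.1, rfl⟩
    · rintro y ⟨x, hx, rfl⟩
      by_cases hxX : x ≤ X
      · exact hxm_max x ⟨hx, hxX⟩
      · have hbig := hX₀ x (le_trans (le_max_left _ _) (le_of_not_ge hxX))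
        exact le_trans hbig.le hm1
  refine ⟨htends, F xm, hm0, hgreat, ?_, ?_⟩
  · intro c hc hcm
    have hxm0 : 0 < xm := by
      rcases lt_or_eq_of_le hxm_mem.1 with h' | h'
      · exact h'
      · exfalso; rw [← h', hF0] at hm0; exact lt_irrefl 0 hm0
    have hev2 : ∀ᶠ x : ℝ in atTop, F x < c := htends.eventually_lt_const hc
    obtain ⟨X₂', hX₂⟩ := eventually_atTop.mp hev2
    have hle : xm ≤ max X₂' xm := le_max_right _ _
    have hFX₂ : F (max X₂' xm) < c := hX₂ _ (le_max_left _ _)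
    have hsub : Set.Icc xm (max X₂' xm) ⊆ Set.Ici 0 :=
      fun y hy => le_trans hxm0.le hy.1
    have hIVT := intermediate_value_Icc' hle (hcont.mono hsub)
    obtain ⟨x, hxmem, hFx⟩ := hIVT ⟨hFX₂.le, hcm⟩
    exact ⟨x, lt_of_lt_of_le hxm0 hxmem.1, hFx⟩
  · rintro c hmc ⟨x, hx, hFx⟩
    have hle := hgreat.2 ⟨x, hx, rfl⟩
    linarith
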